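/- arXiv:1305.0127 — 2 statements merged into one kernel-verified Lean document; each statement's English description precedes it below -/
import Mathlib

section
/- Let S be a factorial set of words over alphabet A with k+1 = Card(S ∩ A). If S is strong (m(w) ≥ 0 for all w ∈ S), then s_n = p_{n+1} − p_n ≥ k for all n ≥ 0; if S is weak (m(w) ≤ 0 for all w ∈ S), then s_n ≤ k for all n ≥ 0. -/
namespace Paper

variable {A : Type*}

/-- A set of words is factorial if it contains all factors of its elements. -/
def Factorial (S : Set (List A)) : Prop := ∀ w ∈ S, ∀ u : List A, u <:+: w → u ∈ S

def Lext (S : Set (List A)) (w : List A) : Set A := {a | a :: w ∈ S}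
def Rext (S : Set (List A)) (w : List A) : Set A := {a | w ++ [a] ∈ S}
def Eext (S : Set (List A)) (w : List A) : Set (A × A) := {p | p.1 :: (w ++ [p.2]) ∈ S}

def ExtVertex (S : Set (List A)) (w : List A) :=
  {v : A ⊕ A // Sum.elim (fun a => a ∈ Lext S w) (fun b => b ∈ Rext S w) v}

/-- The extension graph of `w` in `S`. -/
def extGraph (S : Set (List A)) (w : List A) : SimpleGraph (ExtVertex S w) where
  Adj u v := (∃ a b, u.1 = Sum.inl a ∧ v.1 = Sum.inr b ∧ (a, b) ∈ Eext S w) ∨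
             (∃ a b, u.1 = Sum.inr b ∧ v.1 = Sum.inl a ∧ (a, b) ∈ Eext S w)
  symm := ⟨by
    rintro u v (⟨a, b, h1, h2, h3⟩ | ⟨a, b, h1, h2, h3⟩)
    · exact Or.inr ⟨a, b, h2, h1, h3⟩
    · exact Or.inl ⟨a, b, h2, h1, h3⟩⟩
  loopless := ⟨by
    rintro u (⟨a, b, h1, h2, _⟩ | ⟨a, b, h1, h2, _⟩) <;> rw [h1] at h2 <;> simp at h2⟩

def IsPrefixCode (X : Set (List A)) : Prop :=
  (∀ x ∈ X, x ≠ []) ∧ ∀ x ∈ X, ∀ y ∈ X, x <+: y → x = y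

def IsSuffixCode (X : Set (List A)) : Prop :=
  (∀ x ∈ X, x ≠ []) ∧ ∀ x ∈ X, ∀ y ∈ X, x <:+ y → x = y

def IsBifixCode (X : Set (List A)) : Prop := IsPrefixCode X ∧ IsSuffixCode X

/-- The submonoid `X*` generated by a set of words. -/
def starOf (X : Set (List A)) : Set (List A) :=
  {m | ∃ ls : List (List A), (∀ u ∈ ls, u ∈ X) ∧ m = ls.flatten}

/-- A parse of `w` with respect to `X` : `w = v ++ x ++ u`, `v` has no suffix in `X`,
`x ∈ X*`, `u` has no prefix in `X`. -/
def IsParse (X : Set (List A)) (w : List A) (p : List A × List A × List A) : Prop :=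
  w = p.1 ++ p.2.1 ++ p.2.2 ∧ (∀ s, s <:+ p.1 → s ∉ X) ∧ p.2.1 ∈ starOf X ∧
    (∀ t, t <+: p.2.2 → t ∉ X)

noncomputable def parseCount (X : Set (List A)) (w : List A) : ℕ :=
  {p : List A × List A × List A | IsParse X w p}.ncard

/-- `X` has `S`-degree `d`. -/
def SDegreeIs (S X : Set (List A)) (d : ℕ) : Prop :=
  (∀ w ∈ S, parseCount X w ≤ d) ∧ ∃ w ∈ S, parseCount X w = d

def IsSMaximalBifixCode (S X : Set (List A)) : Prop :=
  IsBifixCode X ∧ X ⊆ S ∧ ∀ Y : Set (List A), IsBifixCode Y → Y ⊆ S → X ⊆ Y → Y = X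

def Recurrent (S : Set (List A)) : Prop :=
  Factorial S ∧ S ≠ {[]} ∧ S.Nonempty ∧ ∀ u ∈ S, ∀ w ∈ S, ∃ v, u ++ v ++ w ∈ S

def UniformlyRecurrent (S : Set (List A)) : Prop :=
  Factorial S ∧ (∀ w ∈ S, ∃ a : A, w ++ [a] ∈ S) ∧
    ∀ u ∈ S, ∃ n : ℕ, ∀ w ∈ S, w.length = n → u <:+: w

/-- The element of the free group corresponding to a word. -/
def toFG (w : List A) : FreeGroup A := (w.map FreeGroup.of).prod

/-- `T` is a basis of the subgroup `H` of the free group on `A`. -/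
def IsBasisOf (T : Set (FreeGroup A)) (H : Subgroup (FreeGroup A)) : Prop :=
  Function.Injective (FreeGroup.lift (Subtype.val : T → FreeGroup A)) ∧
  (FreeGroup.lift (Subtype.val : T → FreeGroup A)).range = H


open scoped Classical

section Aux
variable {A : Type*} [Fintype A]

private lemma finSn (S : Set (List A)) (n : ℕ) : {w ∈ S | w.length = n}.Finite :=
  (List.finite_length_eq A n).subset fun w hw => hw.2

private noncomputable def Fn (S : Set (List A)) (n : ℕ) : Finset (List A) :=
  (finSn S n).toFinset

private lemma mem_Fn {S : Set (List A)} {n : ℕ} {w : List A} :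
    w ∈ Fn S n ↔ w ∈ S ∧ w.length = n := by
  simp [Fn]

private lemma card_Fn (S : Set (List A)) (n : ℕ) :
    {w ∈ S | w.length = n}.ncard = (Fn S n).card :=
  Set.ncard_eq_toFinset_card _ _

private lemma Fn_right (S : Set (List A)) (hfac : Factorial S) (n : ℕ) :
    Fn S (n + 1) =
      (Fn S n).biUnion fun u => ((Rext S u).toFinite.toFinset).image fun a => u ++ [a] := by
  ext w
  simp only [mem_Fn, Finset.mem_biUnion, Finset.mem_image, Set.Finite.mem_toFinset]
  constructor
  · rintro ⟨hwS, hlen⟩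
    have hne : w ≠ [] := by intro h; simp [h] at hlen
    refine ⟨w.dropLast, ⟨hfac w hwS _ w.dropLast_prefix.isInfix, by simp [hlen]⟩,
      w.getLast hne, ?_, List.dropLast_append_getLast hne⟩
    show w.dropLast ++ [w.getLast hne] ∈ S
    rwa [List.dropLast_append_getLast hne]
  · rintro ⟨u, ⟨_, hul⟩, a, ha, rfl⟩
    exact ⟨ha, by simp [hul]⟩

private lemma Fn_left (S : Set (List A)) (hfac : Factorial S) (n : ℕ) :
    Fn S (n + 1) =
      (Fn S n).biUnion fun u => ((Lext S u).toFinite.toFinset).image fun a => a :: u := by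
  ext w
  simp only [mem_Fn, Finset.mem_biUnion, Finset.mem_image, Set.Finite.mem_toFinset]
  constructor
  · rintro ⟨hwS, hlen⟩
    have hne : w ≠ [] := by intro h; simp [h] at hlen
    refine ⟨w.tail, ⟨hfac w hwS _ (w.tail_suffix).isInfix, by simp [hlen]⟩,
      w.head hne, ?_, List.cons_head_tail hne⟩
    show w.head hne :: w.tail ∈ S
    rwa [List.cons_head_tail]
  · rintro ⟨u, ⟨_, hul⟩, a, ha, rfl⟩
    exact ⟨ha, by simp [hul]⟩

private lemma Fn_ext (S : Set (List A)) (hfac : Factorial S) (n : ℕ) :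
    Fn S (n + 2) =
      (Fn S n).biUnion fun u =>
        ((Eext S u).toFinite.toFinset).image fun p => p.1 :: (u ++ [p.2]) := by
  ext w
  simp only [mem_Fn, Finset.mem_biUnion, Finset.mem_image, Set.Finite.mem_toFinset]
  constructor
  · rintro ⟨hwS, hlen⟩
    have hne : w ≠ [] := by intro h; simp [h] at hlen
    have htne : w.tail ≠ [] := by
      intro h
      have := congrArg List.length h
      simp [hlen] at this
    refine ⟨w.tail.dropLast, ⟨hfac w hwS _
        ((w.tail.dropLast_prefix).isInfix.trans (w.tail_suffix).isInfix),
        by simp [hlen]⟩,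
      (w.head hne, w.tail.getLast htne), ?_, ?_⟩
    · show w.head hne :: (w.tail.dropLast ++ [w.tail.getLast htne]) ∈ S
      rw [List.dropLast_append_getLast htne, List.cons_head_tail]
      exact hwS
    · show w.head hne :: (w.tail.dropLast ++ [w.tail.getLast htne]) = w
      rw [List.dropLast_append_getLast htne, List.cons_head_tail]
  · rintro ⟨u, ⟨_, hul⟩, p, hp, rfl⟩
    exact ⟨hp, by simp [hul]⟩

private lemma sum_rext (S : Set (List A)) (hfac : Factorial S) (n : ℕ) :
    (Fn S (n + 1)).card = ∑ u ∈ Fn S n, (Rext S u).ncard := by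
  rw [Fn_right S hfac n, Finset.card_biUnion]
  · refine Finset.sum_congr rfl fun u _ => ?_
    rw [Finset.card_image_of_injective _ (fun a b h => by simpa using h),
      Set.ncard_eq_toFinset_card]
  · intro u hu v hv huv
    simp only [Finset.disjoint_left, Finset.mem_image, Set.Finite.mem_toFinset]
    rintro w ⟨a, _, rfl⟩ ⟨b, _, hb⟩
    have hlen : ([a] : List A).length = ([b] : List A).length := rfl
    exact huv (List.append_inj_left' hb.symm hlen)

private lemma sum_lext (S : Set (List A)) (hfac : Factorial S) (n : ℕ) :
    (Fn S (n + 1)).card = ∑ u ∈ Fn S n, (Lext S u).ncard := by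
  rw [Fn_left S hfac n, Finset.card_biUnion]
  · refine Finset.sum_congr rfl fun u _ => ?_
    rw [Finset.card_image_of_injective _ (fun a b h => by simpa using h),
      Set.ncard_eq_toFinset_card]
  · intro u hu v hv huv
    simp only [Finset.disjoint_left, Finset.mem_image, Set.Finite.mem_toFinset]
    rintro w ⟨a, _, rfl⟩ ⟨b, _, hb⟩
    exact huv (by simpa using (List.tail_eq_of_cons_eq hb).symm)

private lemma sum_eext (S : Set (List A)) (hfac : Factorial S) (n : ℕ) :
    (Fn S (n + 2)).card = ∑ u ∈ Fn S n, (Eext S u).ncard := by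
  rw [Fn_ext S hfac n, Finset.card_biUnion]
  · refine Finset.sum_congr rfl fun u _ => ?_
    rw [Finset.card_image_of_injective _ ?_, Set.ncard_eq_toFinset_card]
    rintro ⟨a, b⟩ ⟨c, d⟩ h
    simp only [List.cons.injEq] at h
    obtain ⟨rfl, h2⟩ := h
    simp only [List.append_cancel_left_eq, List.cons.injEq] at h2
    simp [h2.1]
  · intro u hu v hv huv
    have hlu := (mem_Fn.mp hu).2
    have hlv := (mem_Fn.mp hv).2
    simp only [Finset.disjoint_left, Finset.mem_image, Set.Finite.mem_toFinset]
    rintro w ⟨⟨a, b⟩, _, rfl⟩ ⟨⟨c, d⟩, _, hb⟩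
    simp only [List.cons.injEq] at hb
    refine huv ?_
    have := hb.2.symm
    exact List.append_inj_left' this rfl

end Aux

/-- Over `k + 1` letters, if `S` is strong then `s n ≥ k` for all `n`,
and if `S` is weak then `s n ≤ k` for all `n`, where `s n = p (n+1) - p n`. -/
theorem strong_weak_first_difference {A : Type*} [Fintype A] (S : Set (List A)) (k : ℕ)
    (hfac : Factorial S) (hk : {a : A | [a] ∈ S}.ncard = k + 1) :
    ((∀ w ∈ S, (0 : ℤ) ≤ ((Eext S w).ncard : ℤ) - (Lext S w).ncard - (Rext S w).ncard + 1) →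
      ∀ n : ℕ, {w ∈ S | w.length = n}.ncard + k ≤ {w ∈ S | w.length = n + 1}.ncard) ∧
    ((∀ w ∈ S, ((Eext S w).ncard : ℤ) - (Lext S w).ncard - (Rext S w).ncard + 1 ≤ 0) →
      ∀ n : ℕ, {w ∈ S | w.length = n + 1}.ncard ≤ {w ∈ S | w.length = n}.ncard + k) := by
  classical
  have hnil : [] ∈ S := by
    obtain ⟨a, ha⟩ := Set.nonempty_of_ncard_ne_zero (s := {a : A | [a] ∈ S}) (by omega)
    exact hfac [a] ha [] ⟨[], [a], by simp⟩
  have h0 : (Fn S 0).card = 1 := by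
    have h : Fn S 0 = {[]} := by
      ext w
      simp only [mem_Fn, List.length_eq_zero_iff, Finset.mem_singleton]
      constructor
      · rintro ⟨_, rfl⟩; rfl
      · rintro rfl; exact ⟨hnil, rfl⟩
    rw [h, Finset.card_singleton]
  have h1 : (Fn S 1).card = k + 1 := by
    have h : Fn S 1 = ({a : A | [a] ∈ S}.toFinite.toFinset).image (fun a => [a]) := by
      ext w
      simp only [mem_Fn, Finset.mem_image, Set.Finite.mem_toFinset, Set.mem_setOf_eq]
      constructor
      · rintro ⟨hw, hlen⟩
        obtain ⟨a, rfl⟩ := List.length_eq_one_iff.mp hlen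
        exact ⟨a, hw, rfl⟩
      · rintro ⟨a, ha, rfl⟩; exact ⟨ha, rfl⟩
    rw [h, Finset.card_image_of_injective _ (fun a b hab => by simpa using hab),
      ← Set.ncard_eq_toFinset_card, hk]
  have hsumid : ∀ n : ℕ,
      ∑ u ∈ Fn S n, (((Eext S u).ncard : ℤ) - (Lext S u).ncard - (Rext S u).ncard + 1)
        = ((Fn S (n + 2)).card : ℤ) - (Fn S (n + 1)).card - (Fn S (n + 1)).card
            + (Fn S n).card := by
    intro n
    rw [Finset.sum_add_distrib, Finset.sum_sub_distrib, Finset.sum_sub_distrib,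
      Finset.sum_const, ← Nat.cast_sum, ← Nat.cast_sum, ← Nat.cast_sum,
      ← sum_eext S hfac n, ← sum_lext S hfac n, ← sum_rext S hfac n]
    push_cast
    ring
  constructor
  · intro hstrong n
    rw [card_Fn, card_Fn]
    induction n with
    | zero => show (Fn S 0).card + k ≤ (Fn S 1).card; omega
    | succ n ih =>
      show (Fn S (n + 1)).card + k ≤ (Fn S (n + 2)).card
      have key : (0 : ℤ) ≤ ((Fn S (n + 2)).card : ℤ) - (Fn S (n + 1)).card
          - (Fn S (n + 1)).card + (Fn S n).card := by
        rw [← hsumid n]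
        exact Finset.sum_nonneg fun u hu => hstrong u (mem_Fn.mp hu).1
      omega
  · intro hweak n
    rw [card_Fn, card_Fn]
    induction n with
    | zero => show (Fn S 1).card ≤ (Fn S 0).card + k; omega
    | succ n ih =>
      show (Fn S (n + 2)).card ≤ (Fn S (n + 1)).card + k
      have key : ((Fn S (n + 2)).card : ℤ) - (Fn S (n + 1)).card
          - (Fn S (n + 1)).card + (Fn S n).card ≤ 0 := by
        rw [← hsumid n]
        exact Finset.sum_nonpos fun u hu => hweak u (mem_Fn.mp hu).1
      omega

end Paper
end

section
/- In a Sturmian set S, every word w is ordinary: there exist (a,b) ∈ E(w) such that E(w) ⊆ ({a} × A) ∪ (A × {b}). -/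
namespace Paper

variable {A : Type*}

/-- The set of factors of the infinite word `x`. -/
def factorsOf (x : ℕ → A) : Set (List A) :=
  {w | ∃ i : ℕ, w = (List.range w.length).map fun j => x (i + j)}

def IsRightSpecial (S : Set (List A)) (w : List A) : Prop := 2 ≤ (Rext S w).ncard

/-- `x` is a strict episturmian word: its set of factors is closed under reversal,
has exactly one right-special factor of each length, and every right-special factor `u`
satisfies `r u = Card A`. -/
def IsStrictEpisturmian [Fintype A] (x : ℕ → A) : Prop :=
  (∀ w ∈ factorsOf x, w.reverse ∈ factorsOf x) ∧
  (∀ n : ℕ, ∃! w : List A,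
      w ∈ factorsOf x ∧ w.length = n ∧ IsRightSpecial (factorsOf x) w) ∧
  (∀ w ∈ factorsOf x, IsRightSpecial (factorsOf x) w →
      (Rext (factorsOf x) w).ncard = Fintype.card A)

/-- Segment of the infinite word `x` of length `n` starting at position `i`. -/
private def wseg (x : ℕ → A) (i n : ℕ) : List A := (List.range n).map fun j => x (i + j)

private lemma wseg_length (x : ℕ → A) (i n : ℕ) : (wseg x i n).length = n := by
  simp [wseg]

private lemma wseg_append (x : ℕ → A) (i m n : ℕ) :
    wseg x i (m + n) = wseg x i m ++ wseg x (i + m) n := by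
  simp only [wseg, List.range_add, List.map_append, List.map_map]
  congr 1
  apply List.map_congr_left
  intro j _
  simp only [Function.comp]
  exact congrArg x (by omega)

private lemma mem_factorsOf_iff {x : ℕ → A} {w : List A} :
    w ∈ factorsOf x ↔ ∃ i, w = wseg x i w.length := Iff.rfl

private lemma factorial_factorsOf (x : ℕ → A) : Factorial (factorsOf x) := by
  rintro w ⟨i, hw⟩ u ⟨s, t, hst⟩
  have hlen : w.length = s.length + (u.length + t.length) := by
    rw [← hst]; simp; try ring
  have hw' : w = wseg x i w.length := hw
  rw [hlen, wseg_append, wseg_append] at hw'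
  rw [← hst, List.append_assoc] at hw'
  have h1 := List.append_inj hw' (by rw [wseg_length])
  have h2 := List.append_inj h1.2 (by rw [wseg_length])
  exact ⟨i + s.length, h2.1⟩

private lemma exists_rext {x : ℕ → A} {w : List A} (hw : w ∈ factorsOf x) :
    ∃ b, w ++ [b] ∈ factorsOf x := by
  obtain ⟨i, hw⟩ := hw
  refine ⟨x (i + w.length), ⟨i, ?_⟩⟩
  show w ++ [x (i + w.length)] = wseg x i (w ++ [x (i + w.length)]).length
  have : (w ++ [x (i + w.length)]).length = w.length + 1 := by simp
  rw [this, wseg_append]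
  simp only [wseg]
  rw [← hw]
  rfl

/-- In a Sturmian set (the set of factors of a strict episturmian word),
every word is ordinary. -/
theorem sturmian_word_is_ordinary {A : Type*} [Fintype A] (x : ℕ → A)
    (hx : IsStrictEpisturmian x) :
    ∀ w ∈ factorsOf x, ∃ a b : A, (a, b) ∈ Eext (factorsOf x) w ∧
      Eext (factorsOf x) w ⊆ {p : A × A | p.1 = a} ∪ {p : A × A | p.2 = b} := by
  intro w hw
  set S := factorsOf x with hS
  have hfac : Factorial S := factorial_factorsOf x
  have hrev : ∀ v : List A, v ∈ S ↔ v.reverse ∈ S := fun v =>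
    ⟨fun h => hx.1 v h, fun h => by simpa using hx.1 _ h⟩
  have hlext : ∀ v ∈ S, ∃ a : A, a :: v ∈ S := by
    intro v hv
    obtain ⟨b, hb⟩ := exists_rext ((hrev v).mp hv)
    refine ⟨b, (hrev _).mpr ?_⟩
    simpa using hb
  by_cases hrs : IsRightSpecial S w
  · by_cases hls : 2 ≤ (Lext S w).ncard
    · -- bispecial case : w is a palindrome
      have hrevext : ∀ v : List A, ∀ c : A, (c :: v ∈ S ↔ v.reverse ++ [c] ∈ S) := by
        intro v c
        rw [hrev (c :: v)]
        simp
      have hRL : Rext S w.reverse = Lext S w := by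
        ext c
        simp only [Rext, Lext, Set.mem_setOf_eq]
        rw [hrevext w c]
      have hwrS : w.reverse ∈ S := (hrev w).mp hw
      have hwrRS : IsRightSpecial S w.reverse := by
        unfold IsRightSpecial
        rw [hRL]; exact hls
      obtain ⟨u0, hu0, huniq0⟩ := hx.2.1 w.length
      have hpal : w.reverse = w := by
        have e1 : w.reverse = u0 := huniq0 _ ⟨hwrS, by simp, hwrRS⟩
        have e2 : w = u0 := huniq0 _ ⟨hw, rfl, hrs⟩
        rw [e1, e2]
      obtain ⟨u, ⟨huS, hul, huRS⟩, huniq⟩ := hx.2.1 (w.length + 1)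
      have hune : u ≠ [] := by intro h; rw [h] at hul; simp at hul
      obtain ⟨a, t, hu⟩ := List.exists_cons_of_ne_nil hune
      have htw : t = w := by
        have htS : t ∈ S := hfac u huS t ⟨[a], [], by simp [hu]⟩
        have htl : t.length = w.length := by
          have := hul; rw [hu] at this; simpa using this
        have htRS : IsRightSpecial S t := by
          have hsub : Rext S u ⊆ Rext S t := by
            intro d hd
            exact hfac _ hd (t ++ [d]) ⟨[a], [], by simp [hu]⟩
          exact le_trans huRS (Set.ncard_le_ncard hsub (Set.toFinite _))
        have e1 : t = u0 := huniq0 _ ⟨htS, htl, htRS⟩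
        have e2 : w = u0 := huniq0 _ ⟨hw, rfl, hrs⟩
        rw [e1, e2]
      rw [htw] at hu
      -- u = a :: w, and Rext S u = univ
      have hRu : Rext S u = Set.univ := by
        refine Set.eq_of_subset_of_ncard_le (Set.subset_univ _) ?_ (Set.toFinite (Set.univ : Set A))
        rw [Set.ncard_univ, Nat.card_eq_fintype_card]
        exact (hx.2.2 u huS huRS).ge
      have hRu' : ∀ d : A, u ++ [d] ∈ S := by
        intro d
        have : d ∈ Rext S u := by rw [hRu]; trivial
        exact this
      -- every letter extends w ++ [a] on the left
      have hL : ∀ c : A, c :: (w ++ [a]) ∈ S := by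
        intro c
        rw [hrev]
        have : (c :: (w ++ [a])).reverse = u ++ [c] := by
          simp [hu, hpal]
        rw [this]
        exact hRu' c
      refine ⟨a, a, ?_, ?_⟩
      · show a :: (w ++ [a]) ∈ S
        exact hL a
      · rintro ⟨c, d⟩ hcd
        by_cases hca : c = a
        · exact Or.inl hca
        · refine Or.inr ?_
          show d = a
          by_contra hda
          have hcwS : c :: w ∈ S := hfac _ hcd (c :: w) ⟨[], [d], by simp⟩
          have hdmem : d ∈ Rext S (c :: w) := by
            show (c :: w) ++ [d] ∈ S
            simpa using (show c :: (w ++ [d]) ∈ S from hcd)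
          have hamem : a ∈ Rext S (c :: w) := by
            show (c :: w) ++ [a] ∈ S
            simpa using hL c
          have hcwRS : IsRightSpecial S (c :: w) := by
            have hsub : ({d, a} : Set A) ⊆ Rext S (c :: w) := by
              rintro e (rfl | rfl)
              · exact hdmem
              · exact hamem
            have : ({d, a} : Set A).ncard = 2 := Set.ncard_pair hda
            calc (2 : ℕ) = ({d, a} : Set A).ncard := this.symm
              _ ≤ (Rext S (c :: w)).ncard := Set.ncard_le_ncard hsub (Set.toFinite _)
          have : c :: w = u := huniq _ ⟨hcwS, by simp, hcwRS⟩
          rw [hu] at this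
          exact hca (by injection this)
    · -- w is not left-special : Lext S w is a singleton
      have honeL : ∀ c ∈ Lext S w, ∀ c' ∈ Lext S w, c = c' := by
        have h1 : (Lext S w).ncard ≤ 1 := by omega
        exact fun c hc c' hc' => (Set.ncard_le_one (Set.toFinite _)).mp h1 c hc c' hc'
      obtain ⟨a, ha⟩ := hlext w hw
      obtain ⟨b, hb⟩ := exists_rext hw
      obtain ⟨c, hc⟩ := hlext _ hb
      have hc' : c ∈ Lext S w := hfac _ hc (c :: w) ⟨[], [b], by simp⟩
      have hca : c = a := honeL c hc' a ha
      refine ⟨a, b, ?_, ?_⟩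
      · show a :: (w ++ [b]) ∈ S
        rw [← hca]; exact hc
      · rintro ⟨p, q⟩ hpq
        refine Or.inl ?_
        show p = a
        exact honeL p (hfac _ hpq (p :: w) ⟨[], [q], by simp⟩) a ha
  · -- w is not right-special : Rext S w is a singleton
    have honeR : ∀ c ∈ Rext S w, ∀ c' ∈ Rext S w, c = c' := by
      have h1 : (Rext S w).ncard ≤ 1 := by
        unfold IsRightSpecial at hrs; omega
      exact fun c hc c' hc' => (Set.ncard_le_one (Set.toFinite _)).mp h1 c hc c' hc'
    obtain ⟨b, hb⟩ := exists_rext hw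
    obtain ⟨a, ha⟩ := hlext w hw
    obtain ⟨d, hd⟩ := exists_rext ha
    have hd' : d ∈ Rext S w := hfac _ hd (w ++ [d]) ⟨[a], [], by simp⟩
    have hdb : d = b := honeR d hd' b hb
    refine ⟨a, b, ?_, ?_⟩
    · show a :: (w ++ [b]) ∈ S
      rw [← hdb]
      simpa using hd
    · rintro ⟨p, q⟩ hpq
      refine Or.inr ?_
      show q = b
      have hq : q ∈ Rext S w := hfac _ hpq (w ++ [q]) ⟨[p], [], by simp⟩
      exact honeR q hq b hb

end Paper
end
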